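/- arXiv:math/0401153 — 2 statements merged into one kernel-verified Lean document; each statement's English description precedes it below -/
import Mathlib

section
/- Let k be an even natural number and let Q_L, Q_R ∈ ℍ_ℂ be complex quaternions all of whose four components are real and which have unit norm. Fix I,J ∈ {0,…,k} and set 𝒜 := ⟨(Q_L a Q_R)·n_IJ⟩, 𝒜' := ⟨(Q_L ā Q_R)·n_IJ⟩, ℬ := ⟨(Q_L b Q_R)·n_IJ⟩; assume 𝒜' ≠ 0 and ℬ ≠ 0, and set 𝒰 := ℬ/𝒜', 𝒱 := 𝒜/ℬ. Define, for i,j ∈ {0,…,k}, G^{ij} := ((𝒜')^k/(k+1)²) ∑_{A=0}^{k} ∑_{B=0}^{k} ρ^{−i(A+B−k)} ρ^{−j(A−B)} 𝒰^A 𝒱^B. Then for every q ∈ ℍ_ℂ all of whose components are real and with unit norm: ⟨n_IJ·(Q_L q Q_R)⟩^k = ∑_{i=0}^{k} ∑_{j=0}^{k} G^{ij} · ⟨n_ij·q⟩^k. (These coefficients G^{ij} encode the action of the rotation x ↦ Q_L x Q_R of SO(4) on the basis function Φᵏ_IJ.) -/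
/-- The scalar product `⟨q·q'⟩ = aa' + bb' + cc' + dd'` of two complex quaternions
(the scalar part of `(q q̄' + q' q̄)/2`). -/
noncomputable def scalProd (q q' : Quaternion ℂ) : ℂ :=
  q.re * q'.re + q.imI * q'.imI + q.imJ * q'.imJ + q.imK * q'.imK

/-- A complex quaternion all of whose four components are real. -/
def IsRealQuat (q : Quaternion ℂ) : Prop :=
  ∃ w x y z : ℝ, q = ⟨(w : ℂ), (x : ℂ), (y : ℂ), (z : ℂ)⟩

/-- `α := 2π/(k+1)`. -/
noncomputable def alphaK (k : ℕ) : ℝ := 2 * Real.pi / (k + 1)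

/-- `ρ := e^{2πi/(k+1)}`, a primitive `(k+1)`-th root of unity. -/
noncomputable def rhoK (k : ℕ) : ℂ := Complex.exp (2 * Real.pi * Complex.I / (k + 1))

/-- The complex quaternion `n_IJ = cos(Iα) + i sin(Jα) j₁ + i cos(Jα) j₂ + sin(Iα) j₃`. -/
noncomputable def nQ (k I J : ℕ) : Quaternion ℂ :=
  ⟨(Real.cos (I * alphaK k) : ℂ), Complex.I * (Real.sin (J * alphaK k) : ℂ),
    Complex.I * (Real.cos (J * alphaK k) : ℂ), (Real.sin (I * alphaK k) : ℂ)⟩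

/-- The auxiliary complex quaternion `a = 1 + i j₃`. -/
noncomputable def qa : Quaternion ℂ := ⟨1, 0, 0, Complex.I⟩
/-- The auxiliary complex quaternion `b = j₁ − i j₂`. -/
noncomputable def qb : Quaternion ℂ := ⟨0, 1, -Complex.I, 0⟩

/-- The coefficients `G^{ij}` encoding the action of the rotation `x ↦ Q_L x Q_R`
on the basis function `Φᵏ_IJ`:
`G^{ij} = ((𝒜')^k/(k+1)²) ∑_{A,B=0}^{k} ρ^{−i(A+B−k)} ρ^{−j(A−B)} 𝒰^A 𝒱^B`. -/
noncomputable def Gcoef (k : ℕ) (A' U V : ℂ) (i j : ℕ) : ℂ :=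
  (A' ^ k / ((k : ℂ) + 1) ^ 2) *
    ∑ A ∈ Finset.range (k + 1), ∑ B ∈ Finset.range (k + 1),
      rhoK k ^ (-(i : ℤ) * ((A : ℤ) + (B : ℤ) - (k : ℤ))) *
        rhoK k ^ (-(j : ℤ) * ((A : ℤ) - (B : ℤ))) * U ^ A * V ^ B

noncomputable def qd : Quaternion ℂ := ⟨0, -1, -Complex.I, 0⟩

open Finset Complex

lemma scalProd_comm (q q' : Quaternion ℂ) : scalProd q q' = scalProd q' q := by
  simp [scalProd]; ring

lemma re_mul_comm (p q : Quaternion ℂ) : (p * q).re = (q * p).re := by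
  simp [Quaternion.re_mul]; ring

lemma scalProd_eq (q q' : Quaternion ℂ) : scalProd q q' = (q * star q').re := by
  simp [scalProd, Quaternion.re_mul]
  try ring

lemma scalProd_move (X Y u n : Quaternion ℂ) :
    scalProd (X * u * Y) n = scalProd u (star X * n * star Y) := by
  rw [scalProd_eq, scalProd_eq]
  have : u * star (star X * n * star Y) = u * (Y * star n * X) := by
    simp [mul_assoc, StarMul.star_mul]
  rw [this]
  rw [show X * u * Y * star n = X * (u * (Y * star n)) by rw [mul_assoc, mul_assoc], re_mul_comm,
    mul_assoc]

lemma scalProd_mul_self (p q : Quaternion ℂ) :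
    scalProd (p * q) (p * q) = scalProd p p * scalProd q q := by
  simp [scalProd, Quaternion.re_mul, Quaternion.imI_mul, Quaternion.imJ_mul, Quaternion.imK_mul]
  ring

lemma scalProd_star_self (p : Quaternion ℂ) : scalProd (star p) (star p) = scalProd p p := by
  simp [scalProd]

lemma keyid (m : Quaternion ℂ) :
    scalProd qa m * scalProd (star qa) m - scalProd qb m * scalProd qd m = scalProd m m := by
  simp only [scalProd, Quaternion.re_star, Quaternion.imI_star, Quaternion.imJ_star,
    Quaternion.imK_star]; simp only [qa, qb, qd]
  linear_combination (-(m.imJ^2 + m.imK^2)) * Complex.I_mul_I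


lemma decomp (m : Quaternion ℂ) (w x y z : ℝ) :
    scalProd (⟨(w : ℂ), (x : ℂ), (y : ℂ), (z : ℂ)⟩ : Quaternion ℂ) m
      = ((w : ℂ) - Complex.I * z) / 2 * scalProd qa m
        + ((w : ℂ) + Complex.I * z) / 2 * scalProd (star qa) m
        + ((x : ℂ) + Complex.I * y) / 2 * scalProd qb m
        + (Complex.I * (y : ℂ) - x) / 2 * scalProd qd m := by
  simp only [scalProd, Quaternion.re_star, Quaternion.imI_star, Quaternion.imJ_star,
    Quaternion.imK_star]; simp only [qa, qb, qd]
  linear_combination ((z : ℂ) * m.imK + (y : ℂ) * m.imJ) * Complex.I_mul_I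

lemma rhoK_zpow (k : ℕ) (i : ℤ) :
    rhoK k ^ i = Complex.exp (((i : ℝ) * alphaK k : ℝ) * Complex.I) := by
  rw [rhoK, ← Complex.exp_int_mul]
  congr 1
  have h : ((k : ℂ) + 1) ≠ 0 := Nat.cast_add_one_ne_zero k
  push_cast [alphaK]
  field_simp

lemma rho_nat (k i : ℕ) : rhoK k ^ (i : ℤ)
    = (Real.cos (i * alphaK k) : ℂ) + Complex.I * (Real.sin (i * alphaK k) : ℂ) := by
  rw [rhoK_zpow, show (((i : ℤ) : ℝ) * alphaK k) = (i : ℕ) * alphaK k by push_cast; ring,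
    Complex.exp_mul_I, ← Complex.ofReal_cos, ← Complex.ofReal_sin]
  ring

lemma rho_nat_neg (k i : ℕ) : rhoK k ^ (-(i : ℤ))
    = (Real.cos (i * alphaK k) : ℂ) - Complex.I * (Real.sin (i * alphaK k) : ℂ) := by
  have hp : ((Real.cos (i * alphaK k) : ℂ))^2 + ((Real.sin (i * alphaK k) : ℂ))^2 = 1 := by
    rw [← Complex.ofReal_pow, ← Complex.ofReal_pow, ← Complex.ofReal_add, ← Complex.ofReal_one]
    exact_mod_cast Real.cos_sq_add_sin_sq _
  rw [zpow_neg, rho_nat]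
  apply inv_eq_of_mul_eq_one_right
  linear_combination hp + (-((Real.sin (i * alphaK k) : ℂ))^2) * Complex.I_mul_I

lemma S_qa (k i j : ℕ) : scalProd qa (nQ k i j) = rhoK k ^ (i : ℤ) := by
  rw [rho_nat]; simp only [scalProd, qa, nQ]; ring

lemma S_qa' (k i j : ℕ) : scalProd (star qa) (nQ k i j) = rhoK k ^ (-(i : ℤ)) := by
  rw [rho_nat_neg]; simp only [scalProd, Quaternion.re_star, Quaternion.imI_star, Quaternion.imJ_star, Quaternion.imK_star]; simp only [qa, nQ]; ring

lemma S_qb (k i j : ℕ) : scalProd qb (nQ k i j) = rhoK k ^ (j : ℤ) := by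
  rw [rho_nat]; simp only [scalProd, qb, nQ]; linear_combination (-(Real.cos (j * alphaK k) : ℂ)) * Complex.I_mul_I

lemma S_qd (k i j : ℕ) : scalProd qd (nQ k i j) = rhoK k ^ (-(j : ℤ)) := by
  rw [rho_nat_neg]; simp only [scalProd, qd, nQ]; linear_combination (-(Real.cos (j * alphaK k) : ℂ)) * Complex.I_mul_I

lemma nQ_null (k i j : ℕ) : scalProd (nQ k i j) (nQ k i j) = 0 := by
  have h1 : ((Real.cos (i * alphaK k) : ℂ))^2 + ((Real.sin (i * alphaK k) : ℂ))^2 = 1 := by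
    rw [← Complex.ofReal_pow, ← Complex.ofReal_pow, ← Complex.ofReal_add, ← Complex.ofReal_one]
    exact_mod_cast Real.cos_sq_add_sin_sq _
  have h2 : ((Real.cos (j * alphaK k) : ℂ))^2 + ((Real.sin (j * alphaK k) : ℂ))^2 = 1 := by
    rw [← Complex.ofReal_pow, ← Complex.ofReal_pow, ← Complex.ofReal_add, ← Complex.ofReal_one]
    exact_mod_cast Real.cos_sq_add_sin_sq _
  simp only [scalProd, nQ]
  linear_combination h1 - h2 + ((Real.sin (j * alphaK k) : ℂ)^2 + (Real.cos (j * alphaK k) : ℂ)^2) * Complex.I_mul_I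


lemma rhoK_ne_zero (k : ℕ) : rhoK k ≠ 0 := Complex.exp_ne_zero _

lemma rhoK_prim (k : ℕ) : IsPrimitiveRoot (rhoK k) (k + 1) := by
  have h := Complex.isPrimitiveRoot_exp (k + 1) (Nat.succ_ne_zero k)
  have e : rhoK k = Complex.exp (2 * Real.pi * Complex.I / ((k + 1 : ℕ) : ℂ)) := by
    rw [rhoK]; push_cast; ring_nf
  rw [e]; exact h

lemma orth (k : ℕ) (m : ℤ) :
    ∑ i ∈ range (k + 1), rhoK k ^ ((i : ℤ) * m)
      = if ((k : ℤ) + 1) ∣ m then ((k : ℂ) + 1) else 0 := by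
  have hcast : ∀ i : ℕ, rhoK k ^ ((i : ℤ) * m) = (rhoK k ^ m) ^ i := by
    intro i
    rw [mul_comm, zpow_mul, zpow_natCast]
  simp only [hcast]
  by_cases h : ((k : ℤ) + 1) ∣ m
  · have h1 : rhoK k ^ m = 1 := by
      rw [(rhoK_prim k).zpow_eq_one_iff_dvd]
      exact_mod_cast h
    rw [if_pos h]
    simp only [h1, one_pow, sum_const, card_range, nsmul_eq_mul, mul_one]
    push_cast; ring
  · have h1 : rhoK k ^ m ≠ 1 := by
      rw [Ne, (rhoK_prim k).zpow_eq_one_iff_dvd]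
      exact_mod_cast h
    rw [if_neg h, geom_sum_eq h1]
    have h2 : (rhoK k ^ m) ^ (k + 1) = 1 := by
      rw [← zpow_natCast, ← zpow_mul, mul_comm, zpow_mul, zpow_natCast,
        (rhoK_prim k).pow_eq_one, one_zpow]
    rw [h2, sub_self, zero_div]

lemma cond_iff (k p q r s A B : ℕ) (hk : Even k) (hpqrs : p + q + r + s = k)
    (hA : A < k + 1) (hB : B < k + 1) :
    ((((k : ℤ) + 1) ∣ ((p : ℤ) - q - ((A : ℤ) + B - k)) ∧
      (((k : ℤ) + 1) ∣ ((r : ℤ) - s - ((A : ℤ) - B)))) ↔ (A = p + r ∧ B = p + s)) := by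
  obtain ⟨c, hc⟩ := hk
  constructor
  · rintro ⟨h1, h2⟩
    have hd1 : ((k : ℤ) + 1) ∣ 2 * ((p : ℤ) + r - A) := by
      have : 2 * ((p : ℤ) + r - A) = ((p : ℤ) - q - ((A : ℤ) + B - k)) + ((r : ℤ) - s - ((A : ℤ) - B)) := by
        have : (q : ℤ) + s = (k : ℤ) - p - r := by
          have := hpqrs; push_cast; omega
        omega
      rw [this]; exact dvd_add h1 h2
    have hd2 : ((k : ℤ) + 1) ∣ 2 * ((p : ℤ) + s - B) := by
      have : 2 * ((p : ℤ) + s - B) = ((p : ℤ) - q - ((A : ℤ) + B - k)) - ((r : ℤ) - s - ((A : ℤ) - B)) := by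
        omega
      rw [this]; exact dvd_sub h1 h2
    -- remove the factor 2 using k = c + c
    have hodd : ∀ x : ℤ, ((k : ℤ) + 1) ∣ 2 * x → ((k : ℤ) + 1) ∣ x := by
      intro x hx
      have hxx : x = ((k : ℤ) + 1) * x - (c : ℤ) * (2 * x) := by
        have : (k : ℤ) = 2 * c := by exact_mod_cast congrArg (Nat.cast : ℕ → ℤ) (by omega : k = 2 * c)
        rw [this]; ring
      rw [hxx]
      exact dvd_sub (Dvd.intro x rfl) (Dvd.dvd.mul_left hx _)
    have e1 : (p : ℤ) + r - A = 0 := by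
      refine Int.eq_zero_of_abs_lt_dvd (hodd _ hd1) ?_
      have hpr : p + r ≤ k := by omega
      rw [abs_lt]; constructor <;> [skip; skip] <;> push_cast <;> omega
    have e2 : (p : ℤ) + s - B = 0 := by
      refine Int.eq_zero_of_abs_lt_dvd (hodd _ hd2) ?_
      have hps : p + s ≤ k := by omega
      rw [abs_lt]; constructor <;> [skip; skip] <;> push_cast <;> omega
    constructor <;> [skip; skip] <;> omega
  · rintro ⟨rfl, rfl⟩
    constructor
    · have : ((p : ℤ) - q - (((p + r : ℕ) : ℤ) + ((p + s : ℕ) : ℤ) - k)) = 0 := by push_cast; omega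
      rw [this]; exact dvd_zero _
    · have : ((r : ℤ) - s - (((p + r : ℕ) : ℤ) - ((p + s : ℕ) : ℤ))) = 0 := by push_cast; omega
      rw [this]; exact dvd_zero _

lemma swap4 {M : Type*} [AddCommMonoid M] (s1 s2 s3 s4 : Finset ℕ) (F : ℕ → ℕ → ℕ → ℕ → M) :
    (∑ i ∈ s1, ∑ j ∈ s2, ∑ A ∈ s3, ∑ B ∈ s4, F i j A B)
      = ∑ A ∈ s3, ∑ B ∈ s4, ∑ i ∈ s1, ∑ j ∈ s2, F i j A B :=
  calc (∑ i ∈ s1, ∑ j ∈ s2, ∑ A ∈ s3, ∑ B ∈ s4, F i j A B)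
      = ∑ i ∈ s1, ∑ A ∈ s3, ∑ j ∈ s2, ∑ B ∈ s4, F i j A B :=
        Finset.sum_congr rfl fun i _ => Finset.sum_comm
    _ = ∑ A ∈ s3, ∑ i ∈ s1, ∑ j ∈ s2, ∑ B ∈ s4, F i j A B := Finset.sum_comm
    _ = ∑ A ∈ s3, ∑ i ∈ s1, ∑ B ∈ s4, ∑ j ∈ s2, F i j A B :=
        Finset.sum_congr rfl fun A _ => Finset.sum_congr rfl fun i _ => Finset.sum_comm
    _ = ∑ A ∈ s3, ∑ B ∈ s4, ∑ i ∈ s1, ∑ j ∈ s2, F i j A B :=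
        Finset.sum_congr rfl fun A _ => Finset.sum_comm

lemma weight (k : ℕ) (hk : Even k) (U V : ℂ) (p q r s : ℕ) (hpqrs : p + q + r + s = k) :
    (∑ i ∈ range (k + 1), ∑ j ∈ range (k + 1),
      ((1 / ((k : ℂ) + 1) ^ 2) *
        ∑ A ∈ range (k + 1), ∑ B ∈ range (k + 1),
          rhoK k ^ (-(i : ℤ) * ((A : ℤ) + (B : ℤ) - (k : ℤ))) *
            rhoK k ^ (-(j : ℤ) * ((A : ℤ) - (B : ℤ))) * U ^ A * V ^ B)
        * (rhoK k ^ ((i : ℤ) * ((p : ℤ) - (q : ℤ))) * rhoK k ^ ((j : ℤ) * ((r : ℤ) - (s : ℤ)))))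
      = U ^ (p + r) * V ^ (p + s) := by
  have hρ := rhoK_ne_zero k
  have hK : ((k : ℂ) + 1) ≠ 0 := Nat.cast_add_one_ne_zero k
  -- pointwise rewrite into a 4-fold sum
  have step1 : ∀ i j : ℕ,
      ((1 / ((k : ℂ) + 1) ^ 2) *
        ∑ A ∈ range (k + 1), ∑ B ∈ range (k + 1),
          rhoK k ^ (-(i : ℤ) * ((A : ℤ) + (B : ℤ) - (k : ℤ))) *
            rhoK k ^ (-(j : ℤ) * ((A : ℤ) - (B : ℤ))) * U ^ A * V ^ B)
        * (rhoK k ^ ((i : ℤ) * ((p : ℤ) - (q : ℤ))) * rhoK k ^ ((j : ℤ) * ((r : ℤ) - (s : ℤ))))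
      = ∑ A ∈ range (k + 1), ∑ B ∈ range (k + 1),
          (1 / ((k : ℂ) + 1) ^ 2) * (U ^ A * V ^ B) *
            (rhoK k ^ ((i : ℤ) * ((p : ℤ) - q - ((A : ℤ) + B - k))) *
             rhoK k ^ ((j : ℤ) * ((r : ℤ) - s - ((A : ℤ) - B)))) := by
    intro i j
    simp only [mul_sum, sum_mul]
    refine sum_congr rfl fun A _ => sum_congr rfl fun B _ => ?_
    rw [show (i : ℤ) * ((p : ℤ) - q - ((A : ℤ) + B - k))
        = -(i : ℤ) * ((A : ℤ) + (B : ℤ) - (k : ℤ)) + (i : ℤ) * ((p : ℤ) - (q : ℤ)) by ring,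
      show (j : ℤ) * ((r : ℤ) - s - ((A : ℤ) - B))
        = -(j : ℤ) * ((A : ℤ) - (B : ℤ)) + (j : ℤ) * ((r : ℤ) - (s : ℤ)) by ring,
      zpow_add₀ hρ, zpow_add₀ hρ]
    ring
  simp only [step1]
  rw [swap4]
  have hpr : p + r ≤ k := by omega
  have hps : p + s ≤ k := by omega
  have inner_eq : ∀ A ∈ range (k + 1), ∀ B ∈ range (k + 1),
      (∑ i ∈ range (k + 1), ∑ j ∈ range (k + 1),
        (1 / ((k : ℂ) + 1) ^ 2) * (U ^ A * V ^ B) *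
          (rhoK k ^ ((i : ℤ) * ((p : ℤ) - q - ((A : ℤ) + B - k))) *
           rhoK k ^ ((j : ℤ) * ((r : ℤ) - s - ((A : ℤ) - B)))))
      = if A = p + r ∧ B = p + s then U ^ A * V ^ B else 0 := by
    intro A hA B hB
    have hcol : (∑ i ∈ range (k + 1), ∑ j ∈ range (k + 1),
        (1 / ((k : ℂ) + 1) ^ 2) * (U ^ A * V ^ B) *
          (rhoK k ^ ((i : ℤ) * ((p : ℤ) - q - ((A : ℤ) + B - k))) *
           rhoK k ^ ((j : ℤ) * ((r : ℤ) - s - ((A : ℤ) - B)))))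
        = (1 / ((k : ℂ) + 1) ^ 2) * (U ^ A * V ^ B) *
          ((∑ i ∈ range (k + 1), rhoK k ^ ((i : ℤ) * ((p : ℤ) - q - ((A : ℤ) + B - k)))) *
           (∑ j ∈ range (k + 1), rhoK k ^ ((j : ℤ) * ((r : ℤ) - s - ((A : ℤ) - B))))) := by
      rw [Finset.sum_mul_sum]
      simp only [Finset.mul_sum]
    rw [hcol, orth, orth]
    have hiff := cond_iff k p q r s A B hk hpqrs (mem_range.mp hA) (mem_range.mp hB)
    by_cases h1 : ((k : ℤ) + 1) ∣ ((p : ℤ) - q - ((A : ℤ) + B - k))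
    · by_cases h2 : ((k : ℤ) + 1) ∣ ((r : ℤ) - s - ((A : ℤ) - B))
      · rw [if_pos h1, if_pos h2, if_pos (hiff.mp ⟨h1, h2⟩)]
        field_simp
      · rw [if_pos h1, if_neg h2, if_neg (fun hc => h2 (hiff.mpr hc).2)]
        ring
    · rw [if_neg h1, if_neg (fun hc => h1 (hiff.mpr hc).1)]
      ring
  rw [Finset.sum_congr rfl fun A hA => Finset.sum_congr rfl fun B hB => inner_eq A hA B hB]
  rw [Finset.sum_eq_single (p + r)]
  · simp only [true_and, eq_self_iff_true]
    rw [Finset.sum_eq_single (p + s)]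
    · simp
    · intro b _ hb; simp [hb]
    · intro h; exact absurd (mem_range.mpr (by omega)) h
  · intro b _ hb
    apply Finset.sum_eq_zero
    intro B _
    rw [if_neg (by tauto)]
  · intro h; exact absurd (mem_range.mpr (by omega)) h

lemma pow_expand (K : ℕ) (g : Fin 4 → ℂ) :
    (∑ v, g v) ^ K
      = ∑ f ∈ Fintype.piFinset (fun _ : Fin K => (Finset.univ : Finset (Fin 4))),
          ∏ t, g (f t) := by
  rw [Finset.sum_prod_piFinset]
  rw [Finset.prod_const, Finset.card_univ, Fintype.card_fin]

lemma count_sum (K : ℕ) (f : Fin K → Fin 4) :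
    ∑ v : Fin 4, (Finset.univ.filter fun t => f t = v).card = K := by
  have h := Finset.card_eq_sum_card_fiberwise
    (s := (Finset.univ : Finset (Fin K))) (t := (Finset.univ : Finset (Fin 4)))
    (f := f) (fun x _ => Finset.mem_univ _)
  simpa using h.symm

lemma prod_count (K : ℕ) (f : Fin K → Fin 4) (g : Fin 4 → ℂ) :
    ∏ t, g (f t) = ∏ v : Fin 4, g v ^ (Finset.univ.filter fun t => f t = v).card := by
  rw [← Finset.prod_fiberwise_of_maps_to (g := f) (t := Finset.univ)
    (fun x _ => Finset.mem_univ _) (fun t => g (f t))]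
  refine Finset.prod_congr rfl fun v _ => ?_
  calc ∏ t ∈ Finset.univ.filter fun t => f t = v, g (f t)
      = ∏ t ∈ Finset.univ.filter fun t => f t = v, g v :=
        Finset.prod_congr rfl fun t ht => by rw [(Finset.mem_filter.mp ht).2]
    _ = g v ^ (Finset.univ.filter fun t => f t = v).card := Finset.prod_const _

lemma swap3 {α β γ M : Type*} [AddCommMonoid M] (s1 : Finset α) (s2 : Finset β)
    (s3 : Finset γ) (F : α → β → γ → M) :
    (∑ i ∈ s1, ∑ j ∈ s2, ∑ f ∈ s3, F i j f) = ∑ f ∈ s3, ∑ i ∈ s1, ∑ j ∈ s2, F i j f :=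
  calc (∑ i ∈ s1, ∑ j ∈ s2, ∑ f ∈ s3, F i j f)
      = ∑ i ∈ s1, ∑ f ∈ s3, ∑ j ∈ s2, F i j f :=
        Finset.sum_congr rfl fun i _ => Finset.sum_comm
    _ = ∑ f ∈ s3, ∑ i ∈ s1, ∑ j ∈ s2, F i j f := Finset.sum_comm

lemma core (k : ℕ) (hk : Even k) (c1 c2 c3 c4 U V : ℂ) :
    (c1 * (U * V) + c2 + c3 * U + c4 * V) ^ k
      = ∑ i ∈ range (k + 1), ∑ j ∈ range (k + 1),
          ((1 / ((k : ℂ) + 1) ^ 2) * ∑ A ∈ range (k + 1), ∑ B ∈ range (k + 1),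
            rhoK k ^ (-(i : ℤ) * ((A : ℤ) + (B : ℤ) - (k : ℤ))) *
              rhoK k ^ (-(j : ℤ) * ((A : ℤ) - (B : ℤ))) * U ^ A * V ^ B)
          * (c1 * rhoK k ^ ((i : ℤ)) + c2 * rhoK k ^ (-(i : ℤ))
              + c3 * rhoK k ^ ((j : ℤ)) + c4 * rhoK k ^ (-(j : ℤ))) ^ k := by
  have hρ := rhoK_ne_zero k
  have hzp : ∀ (m : ℤ) (n : ℕ), (rhoK k ^ m) ^ n = rhoK k ^ (m * n) := fun m n => by
    rw [← zpow_natCast (rhoK k ^ m) n, ← zpow_mul]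
  -- expand LHS
  have hL : c1 * (U * V) + c2 + c3 * U + c4 * V
      = ∑ v, (![c1 * (U * V), c2, c3 * U, c4 * V]) v := by
    rw [Fin.sum_univ_four]; simp
  -- expand RHS powers
  have hR : ∀ i j : ℕ,
      (c1 * rhoK k ^ ((i : ℤ)) + c2 * rhoK k ^ (-(i : ℤ))
        + c3 * rhoK k ^ ((j : ℤ)) + c4 * rhoK k ^ (-(j : ℤ)))
      = ∑ v, (![c1 * rhoK k ^ ((i : ℤ)), c2 * rhoK k ^ (-(i : ℤ)),
          c3 * rhoK k ^ ((j : ℤ)), c4 * rhoK k ^ (-(j : ℤ))]) v := by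
    intro i j; rw [Fin.sum_univ_four]; simp
  rw [hL, pow_expand]
  have hR2 : ∀ i j : ℕ,
      ((1 / ((k : ℂ) + 1) ^ 2) * ∑ A ∈ range (k + 1), ∑ B ∈ range (k + 1),
          rhoK k ^ (-(i : ℤ) * ((A : ℤ) + (B : ℤ) - (k : ℤ))) *
            rhoK k ^ (-(j : ℤ) * ((A : ℤ) - (B : ℤ))) * U ^ A * V ^ B)
        * (c1 * rhoK k ^ ((i : ℤ)) + c2 * rhoK k ^ (-(i : ℤ))
            + c3 * rhoK k ^ ((j : ℤ)) + c4 * rhoK k ^ (-(j : ℤ))) ^ k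
      = ∑ f ∈ Fintype.piFinset (fun _ : Fin k => (Finset.univ : Finset (Fin 4))),
          ((1 / ((k : ℂ) + 1) ^ 2) * ∑ A ∈ range (k + 1), ∑ B ∈ range (k + 1),
            rhoK k ^ (-(i : ℤ) * ((A : ℤ) + (B : ℤ) - (k : ℤ))) *
              rhoK k ^ (-(j : ℤ) * ((A : ℤ) - (B : ℤ))) * U ^ A * V ^ B)
          * ∏ t, (![c1 * rhoK k ^ ((i : ℤ)), c2 * rhoK k ^ (-(i : ℤ)),
              c3 * rhoK k ^ ((j : ℤ)), c4 * rhoK k ^ (-(j : ℤ))]) (f t) := by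
    intro i j
    rw [hR i j, pow_expand, Finset.mul_sum]
  simp only [hR2]
  rw [swap3]
  refine Finset.sum_congr rfl fun f _ => ?_
  set p := (Finset.univ.filter fun t => f t = (0 : Fin 4)).card with hp
  set q := (Finset.univ.filter fun t => f t = (1 : Fin 4)).card with hq
  set r := (Finset.univ.filter fun t => f t = (2 : Fin 4)).card with hr
  set s := (Finset.univ.filter fun t => f t = (3 : Fin 4)).card with hs
  have hsum : p + q + r + s = k := by
    have h := count_sum k f
    rw [Fin.sum_univ_four] at h
    exact h
  have hstep : ∀ i j : ℕ,
      ((1 / ((k : ℂ) + 1) ^ 2) * ∑ A ∈ range (k + 1), ∑ B ∈ range (k + 1),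
          rhoK k ^ (-(i : ℤ) * ((A : ℤ) + (B : ℤ) - (k : ℤ))) *
            rhoK k ^ (-(j : ℤ) * ((A : ℤ) - (B : ℤ))) * U ^ A * V ^ B)
        * ∏ t, (![c1 * rhoK k ^ ((i : ℤ)), c2 * rhoK k ^ (-(i : ℤ)),
            c3 * rhoK k ^ ((j : ℤ)), c4 * rhoK k ^ (-(j : ℤ))]) (f t)
      = (c1 ^ p * c2 ^ q * c3 ^ r * c4 ^ s) *
          (((1 / ((k : ℂ) + 1) ^ 2) * ∑ A ∈ range (k + 1), ∑ B ∈ range (k + 1),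
            rhoK k ^ (-(i : ℤ) * ((A : ℤ) + (B : ℤ) - (k : ℤ))) *
              rhoK k ^ (-(j : ℤ) * ((A : ℤ) - (B : ℤ))) * U ^ A * V ^ B)
          * (rhoK k ^ ((i : ℤ) * ((p : ℤ) - (q : ℤ))) * rhoK k ^ ((j : ℤ) * ((r : ℤ) - (s : ℤ))))) := by
    intro i j
    rw [prod_count k f, Fin.prod_univ_four]
    simp only [Matrix.cons_val_zero, Matrix.cons_val_one, Matrix.head_cons,
      Matrix.cons_val_two, Matrix.tail_cons, Matrix.cons_val_three, Matrix.head_fin_const]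
    rw [mul_pow, mul_pow, mul_pow, mul_pow, hzp, hzp, hzp, hzp,
      show (i : ℤ) * ((p : ℤ) - (q : ℤ)) = (i : ℤ) * p + (-(i : ℤ)) * q by ring,
      show (j : ℤ) * ((r : ℤ) - (s : ℤ)) = (j : ℤ) * r + (-(j : ℤ)) * s by ring,
      zpow_add₀ hρ, zpow_add₀ hρ]
    ring
  simp only [hstep]
  simp only [← Finset.mul_sum]
  rw [weight k hk U V p q r s hsum]
  rw [prod_count k f, Fin.prod_univ_four]
  simp only [Matrix.cons_val_zero, Matrix.cons_val_one, Matrix.head_cons,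
    Matrix.cons_val_two, Matrix.tail_cons, Matrix.cons_val_three, Matrix.head_fin_const]
  rw [mul_pow, mul_pow, mul_pow, mul_pow, pow_add, pow_add]
  ring

lemma assemble (k : ℕ) (hk : Even k) (c1 c2 c3 c4 A A' B Bd : ℂ)
    (hA' : A' ≠ 0) (hB : B ≠ 0) (hrel : A * A' - B * Bd = 0) :
    (c1 * A + c2 * A' + c3 * B + c4 * Bd) ^ k
      = ∑ i ∈ Finset.range (k + 1), ∑ j ∈ Finset.range (k + 1),
          Gcoef k A' (B / A') (A / B) i j
            * (c1 * rhoK k ^ ((i : ℤ)) + c2 * rhoK k ^ (-(i : ℤ))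
                + c3 * rhoK k ^ ((j : ℤ)) + c4 * rhoK k ^ (-(j : ℤ))) ^ k := by
  have hfact : c1 * A + c2 * A' + c3 * B + c4 * Bd
      = A' * (c1 * (B / A' * (A / B)) + c2 + c3 * (B / A') + c4 * (A / B)) := by
    field_simp
    linear_combination (-c4) * hrel
  rw [hfact, mul_pow, core k hk c1 c2 c3 c4 (B / A') (A / B), Finset.mul_sum]
  refine Finset.sum_congr rfl fun i _ => ?_
  rw [Finset.mul_sum]
  refine Finset.sum_congr rfl fun j _ => ?_
  simp only [Gcoef]
  ring

/-- Rotation of the basis functions of `𝒱ᵏ`: for a rotation `(Q_L,Q_R)` of SO(4) with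
`𝒜' ≠ 0` and `ℬ ≠ 0`, and every unit quaternion `q` with real components,
`⟨n_IJ·(Q_L q Q_R)⟩^k = ∑_{i,j=0}^{k} G^{ij} ⟨n_ij·q⟩^k`, where
`𝒰 = ℬ/𝒜'` and `𝒱 = 𝒜/ℬ`. -/
theorem rotation_of_basis_functions (k : ℕ) (hk : Even k) (I J : Fin (k + 1))
    (QL QR : Quaternion ℂ) (hQL : IsRealQuat QL) (hQR : IsRealQuat QR)
    (hQLnorm : scalProd QL QL = 1) (hQRnorm : scalProd QR QR = 1)
    (hA' : scalProd (QL * star qa * QR) (nQ k I J) ≠ 0)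
    (hB : scalProd (QL * qb * QR) (nQ k I J) ≠ 0) :
    ∀ q : Quaternion ℂ, IsRealQuat q → scalProd q q = 1 →
      scalProd (nQ k I J) (QL * q * QR) ^ k
        = ∑ i ∈ Finset.range (k + 1), ∑ j ∈ Finset.range (k + 1),
            Gcoef k (scalProd (QL * star qa * QR) (nQ k I J))
              (scalProd (QL * qb * QR) (nQ k I J) /
                scalProd (QL * star qa * QR) (nQ k I J))
              (scalProd (QL * qa * QR) (nQ k I J) /
                scalProd (QL * qb * QR) (nQ k I J)) i j
            * scalProd (nQ k i j) q ^ k := by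
  intro q hq hqnorm
  obtain ⟨w, x, y, z, hq⟩ := hq
  have hm0 : scalProd (star QL * nQ k I J * star QR) (star QL * nQ k I J * star QR) = 0 := by
    rw [scalProd_mul_self, scalProd_mul_self, scalProd_star_self, scalProd_star_self,
      hQLnorm, hQRnorm, nQ_null]
    ring
  have hrel : scalProd (QL * qa * QR) (nQ k I J) * scalProd (QL * star qa * QR) (nQ k I J)
      - scalProd (QL * qb * QR) (nQ k I J) * scalProd (QL * qd * QR) (nQ k I J) = 0 := by
    rw [scalProd_move, scalProd_move, scalProd_move, scalProd_move, keyid, hm0]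
  have hLHS : scalProd (nQ k I J) (QL * q * QR)
      = ((w : ℂ) - Complex.I * z) / 2 * scalProd (QL * qa * QR) (nQ k I J)
        + ((w : ℂ) + Complex.I * z) / 2 * scalProd (QL * star qa * QR) (nQ k I J)
        + ((x : ℂ) + Complex.I * y) / 2 * scalProd (QL * qb * QR) (nQ k I J)
        + (Complex.I * (y : ℂ) - x) / 2 * scalProd (QL * qd * QR) (nQ k I J) := by
    rw [scalProd_comm, scalProd_move, hq, decomp, ← scalProd_move, ← scalProd_move,
      ← scalProd_move, ← scalProd_move]
  have hscal : ∀ i j : ℕ,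
      scalProd (nQ k i j) q
        = ((w : ℂ) - Complex.I * z) / 2 * rhoK k ^ ((i : ℤ))
          + ((w : ℂ) + Complex.I * z) / 2 * rhoK k ^ (-(i : ℤ))
          + ((x : ℂ) + Complex.I * y) / 2 * rhoK k ^ ((j : ℤ))
          + (Complex.I * (y : ℂ) - x) / 2 * rhoK k ^ (-(j : ℤ)) := by
    intro i j
    rw [scalProd_comm, hq, decomp, S_qa, S_qa', S_qb, S_qd]
  rw [hLHS, assemble k hk _ _ _ _ _ _ _ _ hA' hB hrel]
  refine Finset.sum_congr rfl fun i _ => ?_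
  refine Finset.sum_congr rfl fun j _ => ?_
  rw [hscal i j]
end

section
/- Let k be a natural number, p ≥ 1 a natural number, and q an integer. Let g be the rotation of ℝ⁴ acting on coordinates by (x⁰ + i x³) ↦ e^{2πi/p}(x⁰ + i x³) and (x¹ + i x²) ↦ e^{2πiq/p}(x¹ + i x²) (the holonomy generator of the lens space L(p,q)). Then the ℂ-dimension of the subspace of 𝒱ᵏ consisting of polynomials f with f ∘ g = f equals the number of pairs (ℓ,m) ∈ ℤ × ℤ satisfying |ℓ| + |m| ≤ k, ℓ + m ≡ k (mod 2), and ℓ + q·m ≡ 0 (mod p). -/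
open MvPolynomial

/-- The formal Laplacian `Δ₀ p = ∑ μ, ∂²p/∂X_μ²` on `ℂ[X₀,X₁,X₂,X₃]`. -/
noncomputable def lap : MvPolynomial (Fin 4) ℂ →ₗ[ℂ] MvPolynomial (Fin 4) ℂ :=
  ∑ μ : Fin 4,
    ((MvPolynomial.pderiv μ).toLinearMap ∘ₗ (MvPolynomial.pderiv μ).toLinearMap)

/-- `𝒱ᵏ`: the subspace of harmonic polynomials homogeneous of degree `k`. -/
noncomputable def Vk (k : ℕ) : Submodule ℂ (MvPolynomial (Fin 4) ℂ) :=
  MvPolynomial.homogeneousSubmodule (Fin 4) ℂ k ⊓ LinearMap.ker lap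

/-- The substitution describing the rotation of `ℝ⁴` (extended to `ℂ⁴`) acting by
`(x⁰ + i x³) ↦ e^{iψ₁}(x⁰ + i x³)` and `(x¹ + i x²) ↦ e^{iψ₂}(x¹ + i x²)`; the
`μ`-th entry is the `μ`-th coordinate of `g x` as a linear polynomial in `x`. -/
noncomputable def rotSub (ψ₁ ψ₂ : ℝ) : Fin 4 → MvPolynomial (Fin 4) ℂ :=
  ![C ((Real.cos ψ₁ : ℂ)) * X 0 - C ((Real.sin ψ₁ : ℂ)) * X 3,
    C ((Real.cos ψ₂ : ℂ)) * X 1 - C ((Real.sin ψ₂ : ℂ)) * X 2,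
    C ((Real.sin ψ₂ : ℂ)) * X 1 + C ((Real.cos ψ₂ : ℂ)) * X 2,
    C ((Real.sin ψ₁ : ℂ)) * X 0 + C ((Real.cos ψ₁ : ℂ)) * X 3]

/- ### Auxiliary development -/

open Complex Finset

noncomputable section LensAux

abbrev R4 : Type := MvPolynomial (Fin 4) ℂ

/-- exponent finsupp from four naturals -/
def expt (w x y z : ℕ) : Fin 4 →₀ ℕ := Finsupp.equivFunOnFinite.symm ![w, x, y, z]

@[simp] lemma expt_apply_0 (w x y z : ℕ) : expt w x y z 0 = w := rfl
@[simp] lemma expt_apply_1 (w x y z : ℕ) : expt w x y z 1 = x := rfl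
@[simp] lemma expt_apply_2 (w x y z : ℕ) : expt w x y z 2 = y := rfl
@[simp] lemma expt_apply_3 (w x y z : ℕ) : expt w x y z 3 = z := rfl

lemma fin4cases (i : Fin 4) : i = 0 ∨ i = 1 ∨ i = 2 ∨ i = 3 := by
  fin_cases i <;> simp

lemma finsupp4_ext {α β : Fin 4 →₀ ℕ}
    (h0 : α 0 = β 0) (h1 : α 1 = β 1) (h2 : α 2 = β 2) (h3 : α 3 = β 3) : α = β := by
  ext i
  rcases fin4cases i with h|h|h|h <;> subst h <;> assumption

lemma expt_eq_iff {w x y z w' x' y' z' : ℕ} :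
    expt w x y z = expt w' x' y' z' ↔ (w = w' ∧ x = x' ∧ y = y' ∧ z = z') := by
  constructor
  · intro h
    refine ⟨?_, ?_, ?_, ?_⟩
    · simpa using congrFun (congrArg (↑· : (Fin 4 →₀ ℕ) → Fin 4 → ℕ) h) 0
    · simpa using congrFun (congrArg (↑· : (Fin 4 →₀ ℕ) → Fin 4 → ℕ) h) 1
    · simpa using congrFun (congrArg (↑· : (Fin 4 →₀ ℕ) → Fin 4 → ℕ) h) 2
    · simpa using congrFun (congrArg (↑· : (Fin 4 →₀ ℕ) → Fin 4 → ℕ) h) 3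
  · rintro ⟨rfl, rfl, rfl, rfl⟩; rfl

lemma eq_expt (α : Fin 4 →₀ ℕ) : α = expt (α 0) (α 1) (α 2) (α 3) := by
  apply finsupp4_ext <;> simp

lemma degree_eq_sum_univ (α : Fin 4 →₀ ℕ) :
    α.degree = α 0 + α 1 + α 2 + α 3 := by
  rw [Finsupp.degree_apply]
  rw [Finset.sum_subset (Finset.subset_univ _) (by intro i _ hi; simpa using hi)]
  rw [Fin.sum_univ_four]

lemma expt_degree (w x y z : ℕ) : (expt w x y z).degree = w + x + y + z := by
  rw [degree_eq_sum_univ]; simp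

lemma expt_sub01 (w x y z : ℕ) :
    expt w x y z - Finsupp.single 1 1 - Finsupp.single 0 1 = expt (w-1) (x-1) y z := by
  apply finsupp4_ext <;> simp [Finsupp.single_apply]

lemma expt_sub23 (w x y z : ℕ) :
    expt w x y z - Finsupp.single 3 1 - Finsupp.single 2 1 = expt w x (y-1) (z-1) := by
  apply finsupp4_ext <;> simp [Finsupp.single_apply]

lemma expt_add01 (w x y z : ℕ) :
    expt w x y z + Finsupp.single 0 1 + Finsupp.single 1 1 = expt (w+1) (x+1) y z := by
  apply finsupp4_ext <;> simp [Finsupp.single_apply]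

lemma expt_add23 (w x y z : ℕ) :
    expt w x y z + Finsupp.single 2 1 + Finsupp.single 3 1 = expt w x (y+1) (z+1) := by
  apply finsupp4_ext <;> simp [Finsupp.single_apply]

/-- `∂₀∂₁ + ∂₂∂₃`. -/
def lapZ : R4 →ₗ[ℂ] R4 :=
  (pderiv (0 : Fin 4)).toLinearMap ∘ₗ (pderiv 1).toLinearMap
    + (pderiv (2 : Fin 4)).toLinearMap ∘ₗ (pderiv 3).toLinearMap

lemma lapZ_monomial (s : Fin 4 →₀ ℕ) (t : ℂ) :
    lapZ (monomial s t)
      = monomial (s - Finsupp.single 1 1 - Finsupp.single 0 1) (t * s 1 * s 0)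
        + monomial (s - Finsupp.single 3 1 - Finsupp.single 2 1) (t * s 3 * s 2) := by
  have h0 : (s - Finsupp.single (1 : Fin 4) (1:ℕ)) 0 = s 0 := by
    rw [Finsupp.tsub_apply]
    simp [Finsupp.single_apply]
  have h2 : (s - Finsupp.single (3 : Fin 4) (1:ℕ)) 2 = s 2 := by
    rw [Finsupp.tsub_apply]
    simp [Finsupp.single_apply]
  show pderiv 0 (pderiv 1 (monomial s t)) + pderiv 2 (pderiv 3 (monomial s t)) = _
  rw [pderiv_monomial, pderiv_monomial, pderiv_monomial, pderiv_monomial, h0, h2]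

/-- coefficients of the explicit harmonic polynomials -/
def cf (a b c d : ℕ) : ℕ → ℂ
  | 0 => 1
  | (j+1) => (-(((c - j : ℕ) : ℂ) * ((d - j : ℕ) : ℂ))
      / (((a : ℂ) + j + 1) * ((b : ℂ) + j + 1))) * cf a b c d j

lemma cf_rec (a b c d j : ℕ) :
    ((a : ℂ) + j + 1) * ((b : ℂ) + j + 1) * cf a b c d (j+1)
      = -(((c - j : ℕ) : ℂ) * ((d - j : ℕ) : ℂ)) * cf a b c d j := by
  have h1 : ((a : ℂ) + j + 1) ≠ 0 := by
    have : (0:ℝ) < a + j + 1 := by positivity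
    intro h
    have := congrArg Complex.re h
    push_cast at this
    simp at this
    linarith
  have h2 : ((b : ℂ) + j + 1) ≠ 0 := by
    intro h
    have := congrArg Complex.re h
    push_cast at this
    simp at this
    have : (0:ℝ) < (b:ℝ) + j + 1 := by positivity
    linarith
  rw [cf]
  field_simp

def hp (a b c d : ℕ) : R4 :=
  ∑ j ∈ Finset.range (min c d + 1),
    monomial (expt (a+j) (b+j) (c-j) (d-j)) (cf a b c d j)

lemma hp_homog (a b c d : ℕ) : (hp a b c d).IsHomogeneous (a+b+c+d) := by
  apply MvPolynomial.IsHomogeneous.sum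
  intro j hj
  apply isHomogeneous_monomial
  rw [expt_degree]
  have hj' : j ≤ min c d := by
    simpa [Nat.lt_succ_iff] using hj
  omega

lemma hp_harmonic (a b c d : ℕ) (hab : a = 0 ∨ b = 0) : lapZ (hp a b c d) = 0 := by
  set n := min c d with hn
  rw [hp, map_sum]
  have expand : ∀ j ∈ Finset.range (n+1),
      lapZ (monomial (expt (a+j) (b+j) (c-j) (d-j)) (cf a b c d j))
      = monomial (expt (a+j-1) (b+j-1) (c-j) (d-j)) (cf a b c d j * (b+j) * (a+j))
        + monomial (expt (a+j) (b+j) (c-j-1) (d-j-1)) (cf a b c d j * ((d-j : ℕ)) * ((c-j : ℕ))) := by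
    intro j _
    rw [lapZ_monomial, expt_sub01, expt_sub23]
    simp
  rw [Finset.sum_congr rfl expand, Finset.sum_add_distrib]
  rw [Finset.sum_range_succ' (fun j => monomial (expt (a+j-1) (b+j-1) (c-j) (d-j))
        (cf a b c d j * (b+j) * (a+j))) n]
  rw [Finset.sum_range_succ (fun j => monomial (expt (a+j) (b+j) (c-j-1) (d-j-1))
        (cf a b c d j * ((d-j : ℕ)) * ((c-j : ℕ)))) n]
  have hz1 : (monomial (expt (a+0-1) (b+0-1) (c-0) (d-0))
      (cf a b c d 0 * ((b:ℂ)+(0:ℕ)) * ((a:ℂ)+(0:ℕ)))) = 0 := by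
    have : (cf a b c d 0 * ((b:ℂ)+(0:ℕ)) * ((a:ℂ)+(0:ℕ))) = 0 := by
      rcases hab with h|h <;> subst h <;> simp
    rw [this, map_zero]
  have hz2 : (monomial (expt (a+n) (b+n) (c-n-1) (d-n-1))
      (cf a b c d n * ((d-n : ℕ):ℂ) * ((c-n : ℕ):ℂ))) = 0 := by
    have : (cf a b c d n * ((d-n : ℕ):ℂ) * ((c-n : ℕ):ℂ)) = 0 := by
      rcases Nat.le_total c d with h|h
      · have : c - n = 0 := by omega
        rw [this]; simp
      · have : d - n = 0 := by omega
        rw [this]; simp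
    rw [this, map_zero]
  rw [hz1, hz2, add_zero, add_zero, ← Finset.sum_add_distrib]
  apply Finset.sum_eq_zero
  intro j hj
  have hj' : j < n := Finset.mem_range.mp hj
  have he1 : expt (a+(j+1)-1) (b+(j+1)-1) (c-(j+1)) (d-(j+1))
      = expt (a+j) (b+j) (c-j-1) (d-j-1) := by
    rw [expt_eq_iff]; omega
  rw [he1, ← map_add]
  have hcoef : cf a b c d (j+1) * ((b:ℂ)+((j+1:ℕ):ℂ)) * ((a:ℂ)+((j+1:ℕ):ℂ))
      + cf a b c d j * ((d-j : ℕ):ℂ) * ((c-j : ℕ):ℂ) = 0 := by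
    have := cf_rec a b c d j
    push_cast at this ⊢
    linear_combination this
  rw [hcoef, map_zero]

lemma coeff_hp_self (a b c d j : ℕ) (hj : j ≤ min c d) :
    coeff (expt (a+j) (b+j) (c-j) (d-j)) (hp a b c d) = cf a b c d j := by
  rw [hp, MvPolynomial.coeff_sum]
  rw [Finset.sum_eq_single j]
  · simp [coeff_monomial]
  · intro j' _ hne
    rw [coeff_monomial, if_neg]
    intro h
    rw [expt_eq_iff] at h
    omega
  · intro h
    exact absurd (Finset.mem_range.mpr (Nat.lt_succ_of_le hj)) h

lemma coeff_hp_ne (a b c d : ℕ) (α : Fin 4 →₀ ℕ)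
    (h : ∀ j ≤ min c d, α ≠ expt (a+j) (b+j) (c-j) (d-j)) :
    coeff α (hp a b c d) = 0 := by
  rw [hp, MvPolynomial.coeff_sum]
  apply Finset.sum_eq_zero
  intro j hj
  rw [coeff_monomial, if_neg]
  intro hc
  exact h j (by simpa [Nat.lt_succ_iff] using hj) hc.symm

/- ### coefficient recursion for harmonic polynomials -/

lemma coeff_pderiv (i : Fin 4) (g : R4) (β : Fin 4 →₀ ℕ) :
    coeff β (pderiv i g) = ((β i + 1 : ℕ) : ℂ) * coeff (β + Finsupp.single i 1) g := by
  induction g using MvPolynomial.induction_on' with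
  | monomial s t =>
    rw [pderiv_monomial, coeff_monomial, coeff_monomial]
    by_cases h : s = β + Finsupp.single i 1
    · subst h
      rw [if_pos (by rw [add_tsub_cancel_right]), if_pos rfl]
      rw [Finsupp.add_apply, Finsupp.single_eq_same]
      push_cast
      ring
    · rw [if_neg h, mul_zero]
      split_ifs with h2
      · have hsi : s i = 0 := by
          by_contra hne
          apply h
          have : s = s - Finsupp.single i 1 + Finsupp.single i 1 := by
            ext a
            rw [Finsupp.add_apply, Finsupp.tsub_apply, Finsupp.single_apply]
            split_ifs with ha
            · subst ha; omega
            · simp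
          rw [this, h2]
        rw [hsi]
        simp
      · rfl
  | add p q hp hq =>
    rw [map_add, coeff_add, coeff_add, hp, hq]
    ring

lemma coeff_lapZ (f : R4) (β : Fin 4 →₀ ℕ) :
    coeff β (lapZ f)
      = ((β 0 + 1 : ℕ) : ℂ) * ((β 1 + 1 : ℕ) : ℂ)
          * coeff (β + Finsupp.single 0 1 + Finsupp.single 1 1) f
        + ((β 2 + 1 : ℕ) : ℂ) * ((β 3 + 1 : ℕ) : ℂ)
          * coeff (β + Finsupp.single 2 1 + Finsupp.single 3 1) f := by
  show coeff β (pderiv 0 (pderiv 1 f) + pderiv 2 (pderiv 3 f)) = _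
  rw [coeff_add, coeff_pderiv, coeff_pderiv, coeff_pderiv, coeff_pderiv]
  have e1 : (β + Finsupp.single (0:Fin 4) (1:ℕ)) 1 = β 1 := by
    rw [Finsupp.add_apply, Finsupp.single_apply]
    simp
  have e2 : (β + Finsupp.single (2:Fin 4) (1:ℕ)) 3 = β 3 := by
    rw [Finsupp.add_apply, Finsupp.single_apply]
    simp
  rw [e1, e2]
  ring

lemma harm_rec {f : R4} (hf : lapZ f = 0) (w x y z : ℕ) :
    ((w+1:ℕ):ℂ) * ((x+1:ℕ):ℂ) * coeff (expt (w+1) (x+1) y z) f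
      + ((y+1:ℕ):ℂ) * ((z+1:ℕ):ℂ) * coeff (expt w x (y+1) (z+1)) f = 0 := by
  have h0 : coeff (expt w x y z) (lapZ f) = 0 := by rw [hf]; simp
  rw [coeff_lapZ, expt_add01, expt_add23] at h0
  simp only [expt_apply_0, expt_apply_1, expt_apply_2, expt_apply_3] at h0
  push_cast at h0 ⊢
  linear_combination h0

/- ### diagonal substitutions -/

def dsub (e : Fin 4 → ℂ) : Fin 4 → R4 := fun i => C (e i) * X i

lemma aeval_dsub_monomial (e : Fin 4 → ℂ) (s : Fin 4 →₀ ℕ) (t : ℂ) :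
    aeval (dsub e) (monomial s t) = monomial s (t * ∏ i, e i ^ s i) := by
  rw [aeval_monomial, monomial_eq]
  rw [Finsupp.prod_fintype _ _ (fun i => pow_zero _),
    Finsupp.prod_fintype _ _ (fun i => pow_zero _)]
  simp only [dsub, mul_pow, ← C_pow, algebraMap_eq]
  rw [Finset.prod_mul_distrib, ← map_prod C (fun i => e i ^ s i), ← mul_assoc, ← C_mul, mul_comm t]

lemma coeff_aeval_dsub (e : Fin 4 → ℂ) (f : R4) (α : Fin 4 →₀ ℕ) :
    coeff α (aeval (dsub e) f) = (∏ i, e i ^ α i) * coeff α f := by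
  induction f using MvPolynomial.induction_on' with
  | monomial s t =>
    rw [aeval_dsub_monomial]
    rw [coeff_monomial, coeff_monomial]
    split_ifs with h
    · subst h; ring
    · ring
  | add p q hp hq =>
    rw [map_add, coeff_add, coeff_add, hp, hq]
    ring

def evc (θ₁ θ₂ : ℂ) : Fin 4 → ℂ := ![Complex.exp θ₁, Complex.exp (-θ₁),
  Complex.exp θ₂, Complex.exp (-θ₂)]

lemma prod_evc (θ₁ θ₂ : ℂ) (α : Fin 4 →₀ ℕ) :
    ∏ i, evc θ₁ θ₂ i ^ α i
      = Complex.exp ((((α 0 : ℕ) : ℂ) - ((α 1 : ℕ) : ℂ)) * θ₁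
          + (((α 2 : ℕ) : ℂ) - ((α 3 : ℕ) : ℂ)) * θ₂) := by
  rw [Fin.prod_univ_four]
  show Complex.exp θ₁ ^ α 0 * Complex.exp (-θ₁) ^ α 1
      * Complex.exp θ₂ ^ α 2 * Complex.exp (-θ₂) ^ α 3 = _
  rw [← Complex.exp_nat_mul, ← Complex.exp_nat_mul, ← Complex.exp_nat_mul,
    ← Complex.exp_nat_mul, ← Complex.exp_add, ← Complex.exp_add, ← Complex.exp_add]
  congr 1
  ring

lemma exp_combo_eq_one_iff (p : ℕ) (hp1 : 1 ≤ p) (q ℓ m : ℤ) :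
    Complex.exp ((ℓ:ℂ) * (((2 * Real.pi / p : ℝ) : ℂ) * Complex.I)
        + (m:ℂ) * (((2 * Real.pi * q / p : ℝ) : ℂ) * Complex.I)) = 1
      ↔ (p:ℤ) ∣ (ℓ + q * m) := by
  have hp0 : (p:ℂ) ≠ 0 := by
    simp only [ne_eq, Nat.cast_eq_zero]
    omega
  have hπ : (Real.pi : ℂ) ≠ 0 := by exact_mod_cast Real.pi_ne_zero
  have hI := Complex.I_ne_zero
  rw [Complex.exp_eq_one_iff]
  constructor
  · rintro ⟨n, hn⟩
    push_cast at hn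
    field_simp at hn
    have h2 : (ℓ : ℂ) + q * m = n * p := by
      have h2' : ((ℓ : ℂ) + q * m) * (2 * Real.pi * Complex.I)
          = (n * p) * (2 * Real.pi * Complex.I) := by linear_combination (2 * (Real.pi:ℂ) * Complex.I) * hn
      have hne : (2 * (Real.pi:ℂ) * Complex.I) ≠ 0 := by
        simp [hπ, hI]
      exact mul_right_cancel₀ hne h2'
    have h3 : ℓ + q*m = n*p := by exact_mod_cast h2
    exact ⟨n, by rw [h3]; ring⟩
  · rintro ⟨n, hn⟩
    refine ⟨n, ?_⟩
    have hc : (ℓ : ℂ) + q * m = p * n := by exact_mod_cast congrArg (Int.cast : ℤ → ℂ) hn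
    push_cast
    field_simp
    linear_combination hc

/- ### the change of variables -/

def σsub : Fin 4 → R4 := ![X 0 + C I * X 3, X 0 - C I * X 3, X 1 + C I * X 2, X 1 - C I * X 2]

def τsub : Fin 4 → R4 := ![C (1/2 : ℂ) * (X 0 + X 1), C (1/2 : ℂ) * (X 2 + X 3),
  C (-I/2) * (X 2 - X 3), C (-I/2) * (X 0 - X 1)]

lemma CI_sq : (C I : R4) * C I = -1 := by
  rw [← C_mul, Complex.I_mul_I, map_neg, map_one]

lemma hA : (C (1/2 : ℂ) : R4) * 2 = 1 := by
  rw [← map_ofNat (C : ℂ →+* R4) 2, ← C_mul]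
  norm_num

lemma hB : (C I : R4) * C (-I/2) = C (1/2 : ℂ) := by
  rw [← C_mul]
  congr 1
  have := Complex.I_mul_I
  field_simp
  linear_combination -this

lemma hC : (C (-I/2 : ℂ) : R4) * C I * 2 = 1 := by
  rw [mul_comm (C (-I/2 : ℂ)) (C I), mul_assoc, ← hA, ← mul_assoc, hB]

lemma comp_sigma_tau : (aeval σsub).comp (aeval τsub) = AlgHom.id ℂ R4 := by
  apply MvPolynomial.algHom_ext
  intro i
  rcases fin4cases i with rfl|rfl|rfl|rfl
  · rw [AlgHom.comp_apply, AlgHom.id_apply, aeval_X]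
    simp only [τsub, σsub, Matrix.cons_val_zero, Matrix.cons_val_one, Matrix.head_cons,
      Matrix.cons_val_two, Matrix.tail_cons, Matrix.cons_val_three, map_add, map_sub, map_mul,
      aeval_C, aeval_X, algebraMap_eq]
    linear_combination (X 0 : R4) * hA
  · rw [AlgHom.comp_apply, AlgHom.id_apply, aeval_X]
    simp only [τsub, σsub, Matrix.cons_val_zero, Matrix.cons_val_one, Matrix.head_cons,
      Matrix.cons_val_two, Matrix.tail_cons, Matrix.cons_val_three, map_add, map_sub, map_mul,
      aeval_C, aeval_X, algebraMap_eq]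
    linear_combination (X 1 : R4) * hA
  · rw [AlgHom.comp_apply, AlgHom.id_apply, aeval_X]
    simp only [τsub, σsub, Matrix.cons_val_zero, Matrix.cons_val_one, Matrix.head_cons,
      Matrix.cons_val_two, Matrix.tail_cons, Matrix.cons_val_three, map_add, map_sub, map_mul,
      aeval_C, aeval_X, algebraMap_eq]
    linear_combination (X 2 : R4) * hC
  · rw [AlgHom.comp_apply, AlgHom.id_apply, aeval_X]
    simp only [τsub, σsub, Matrix.cons_val_zero, Matrix.cons_val_one, Matrix.head_cons,
      Matrix.cons_val_two, Matrix.tail_cons, Matrix.cons_val_three, map_add, map_sub, map_mul,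
      aeval_C, aeval_X, algebraMap_eq]
    linear_combination (X 3 : R4) * hC

lemma comp_tau_sigma : (aeval τsub).comp (aeval σsub) = AlgHom.id ℂ R4 := by
  apply MvPolynomial.algHom_ext
  intro i
  rcases fin4cases i with rfl|rfl|rfl|rfl
  · rw [AlgHom.comp_apply, AlgHom.id_apply, aeval_X]
    simp only [τsub, σsub, Matrix.cons_val_zero, Matrix.cons_val_one, Matrix.head_cons,
      Matrix.cons_val_two, Matrix.tail_cons, Matrix.cons_val_three, map_add, map_sub, map_mul,
      aeval_C, aeval_X, algebraMap_eq]
    linear_combination ((X 0 : R4) - X 1) * hB + (X 0 : R4) * hA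
  · rw [AlgHom.comp_apply, AlgHom.id_apply, aeval_X]
    simp only [τsub, σsub, Matrix.cons_val_zero, Matrix.cons_val_one, Matrix.head_cons,
      Matrix.cons_val_two, Matrix.tail_cons, Matrix.cons_val_three, map_add, map_sub, map_mul,
      aeval_C, aeval_X, algebraMap_eq]
    linear_combination (-((X 0 : R4) - X 1)) * hB + (X 1 : R4) * hA
  · rw [AlgHom.comp_apply, AlgHom.id_apply, aeval_X]
    simp only [τsub, σsub, Matrix.cons_val_zero, Matrix.cons_val_one, Matrix.head_cons,
      Matrix.cons_val_two, Matrix.tail_cons, Matrix.cons_val_three, map_add, map_sub, map_mul,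
      aeval_C, aeval_X, algebraMap_eq]
    linear_combination ((X 2 : R4) - X 3) * hB + (X 2 : R4) * hA
  · rw [AlgHom.comp_apply, AlgHom.id_apply, aeval_X]
    simp only [τsub, σsub, Matrix.cons_val_zero, Matrix.cons_val_one, Matrix.head_cons,
      Matrix.cons_val_two, Matrix.tail_cons, Matrix.cons_val_three, map_add, map_sub, map_mul,
      aeval_C, aeval_X, algebraMap_eq]
    linear_combination (-((X 2 : R4) - X 3)) * hB + (X 3 : R4) * hA

lemma aeval_sigma_tau_apply (x : R4) : aeval σsub (aeval τsub x) = x :=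
  DFunLike.congr_fun comp_sigma_tau x

lemma aeval_tau_sigma_apply (x : R4) : aeval τsub (aeval σsub x) = x :=
  DFunLike.congr_fun comp_tau_sigma x

lemma aeval_sigma_inj : Function.Injective (fun x : R4 => aeval σsub x) := by
  intro x y h
  have := congrArg (aeval τsub) h
  rwa [aeval_tau_sigma_apply, aeval_tau_sigma_apply] at this

def Jc : Fin 4 → Fin 4 → ℂ := ![![1,1,0,0], ![0,0,1,1], ![0,0,I,-I], ![I,-I,0,0]]

lemma pderiv_sigma (i j : Fin 4) : pderiv i (σsub j) = C (Jc i j) := by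
  rcases fin4cases i with rfl|rfl|rfl|rfl <;> rcases fin4cases j with rfl|rfl|rfl|rfl <;>
    simp [σsub, Jc, pderiv_mul]

lemma pderiv_comm4 (i j : Fin 4) (f : R4) :
    pderiv i (pderiv j f) = pderiv j (pderiv i f) := by
  induction f using MvPolynomial.induction_on' with
  | monomial s t =>
    rw [pderiv_monomial, pderiv_monomial, pderiv_monomial, pderiv_monomial]
    rcases eq_or_ne i j with rfl|hij
    · rfl
    · have e1 : s - Finsupp.single j 1 - Finsupp.single i 1
          = s - Finsupp.single i 1 - Finsupp.single j 1 := by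
        ext a
        rw [Finsupp.tsub_apply, Finsupp.tsub_apply, Finsupp.tsub_apply, Finsupp.tsub_apply]
        omega
      have e2 : (s - Finsupp.single j (1:ℕ)) i = s i := by
        rw [Finsupp.tsub_apply, Finsupp.single_apply, if_neg (Ne.symm hij)]
        simp
      have e3 : (s - Finsupp.single i (1:ℕ)) j = s j := by
        rw [Finsupp.tsub_apply, Finsupp.single_apply, if_neg hij]
        simp
      rw [e1, e2, e3]
      ring_nf
  | add p q hp hq => rw [map_add, map_add, hp, hq, map_add, map_add]

lemma chain_rule (i : Fin 4) (f : R4) :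
    pderiv i (aeval σsub f) = ∑ j, C (Jc i j) * aeval σsub (pderiv j f) := by
  induction f using MvPolynomial.induction_on with
  | C a => simp [aeval_C, pderiv_C]
  | add p q hp hq =>
    rw [map_add, map_add, hp, hq, ← Finset.sum_add_distrib]
    congr 1
    ext j
    rw [map_add, map_add, mul_add]
  | mul_X p n ih =>
    rw [map_mul, aeval_X, pderiv_mul, ih, pderiv_sigma]
    have expand : ∀ j, pderiv j (p * X n) = pderiv j p * X n + p * pderiv j (X n) :=
      fun j => pderiv_mul
    simp only [expand, map_add, map_mul, aeval_X, mul_add]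
    rw [Finset.sum_add_distrib, Finset.sum_mul]
    congr 1
    · congr 1
      ext j
      ring
    · rcases fin4cases n with rfl|rfl|rfl|rfl <;>
        · rw [Fin.sum_univ_four]
          simp [pderiv_X, Pi.single_apply]
          ring_nf
          try simp [mul_comm]

lemma lap_aeval (f : R4) : lap (aeval σsub f) = (4:ℂ) • aeval σsub (lapZ f) := by
  have step : ∀ μ : Fin 4, pderiv μ (pderiv μ (aeval σsub f))
      = ∑ j, ∑ i, C (Jc μ j) * (C (Jc μ i) * aeval σsub (pderiv i (pderiv j f))) := by
    intro μ
    rw [chain_rule, map_sum]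
    refine Finset.sum_congr rfl fun j _ => ?_
    rw [pderiv_mul, chain_rule, Finset.mul_sum]
    simp [pderiv_C]
  have L : lap (aeval σsub f) = ∑ μ : Fin 4, pderiv μ (pderiv μ (aeval σsub f)) := by
    rw [lap, LinearMap.sum_apply]
    rfl
  have RZ : lapZ f = pderiv 0 (pderiv 1 f) + pderiv 2 (pderiv 3 f) := rfl
  rw [L]
  rw [Finset.sum_congr rfl fun μ _ => step μ]
  rw [RZ, map_add, smul_eq_C_mul]
  simp only [Fin.sum_univ_four, Jc, Matrix.cons_val_zero, Matrix.cons_val_one, Matrix.head_cons,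
    Matrix.cons_val_two, Matrix.tail_cons, Matrix.cons_val_three, map_one, map_zero, map_neg,
    zero_mul, mul_zero, one_mul, add_zero, zero_add, neg_mul, mul_neg, neg_neg]
  rw [pderiv_comm4 1 0 f, pderiv_comm4 3 2 f]
  rw [show ((C (4:ℂ)) : R4) = 4 from map_ofNat (C : ℂ →+* R4) 4]
  linear_combination (aeval σsub (pderiv 0 (pderiv 0 f)) + aeval σsub (pderiv 1 (pderiv 1 f))
    + aeval σsub (pderiv 2 (pderiv 2 f)) + aeval σsub (pderiv 3 (pderiv 3 f))
    - 2 * aeval σsub (pderiv 0 (pderiv 1 f)) - 2 * aeval σsub (pderiv 2 (pderiv 3 f))) * CI_sq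

lemma exp_pos_eq (ψ : ℝ) :
    Complex.exp ((ψ:ℂ) * I) = ((Real.cos ψ : ℂ)) + ((Real.sin ψ : ℂ)) * I := by
  rw [Complex.exp_mul_I, Complex.ofReal_cos, Complex.ofReal_sin]

lemma exp_neg_eq (ψ : ℝ) :
    Complex.exp (-((ψ:ℂ) * I)) = ((Real.cos ψ : ℂ)) - ((Real.sin ψ : ℂ)) * I := by
  rw [show -((ψ:ℂ)*I) = ((-ψ:ℝ):ℂ)*I by push_cast; ring, exp_pos_eq]
  push_cast [Real.cos_neg, Real.sin_neg]
  ring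

lemma rot_aeval (ψ₁ ψ₂ : ℝ) :
    (aeval (rotSub ψ₁ ψ₂)).comp (aeval σsub)
      = (aeval σsub).comp (aeval (dsub (evc ((ψ₁:ℂ)*I) ((ψ₂:ℂ)*I)))) := by
  apply MvPolynomial.algHom_ext
  intro i
  rcases fin4cases i with rfl|rfl|rfl|rfl <;>
    rw [AlgHom.comp_apply, AlgHom.comp_apply, aeval_X, aeval_X] <;>
    simp only [σsub, dsub, evc, rotSub, Matrix.cons_val_zero, Matrix.cons_val_one,
      Matrix.head_cons, Matrix.cons_val_two, Matrix.tail_cons, Matrix.cons_val_three,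
      map_add, map_sub, map_mul, aeval_C, aeval_X, algebraMap_eq, exp_pos_eq, exp_neg_eq,
      map_one, map_zero]
  · linear_combination (-(C (Real.sin ψ₁ : ℂ) : R4) * X 3) * CI_sq
  · linear_combination (-(C (Real.sin ψ₁ : ℂ) : R4) * X 3) * CI_sq
  · linear_combination (-(C (Real.sin ψ₂ : ℂ) : R4) * X 2) * CI_sq
  · linear_combination (-(C (Real.sin ψ₂ : ℂ) : R4) * X 2) * CI_sq

/- ### homogeneity is preserved -/

lemma sigma_homog (i : Fin 4) : (σsub i).IsHomogeneous 1 := by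
  rcases fin4cases i with rfl|rfl|rfl|rfl <;>
    · simp only [σsub, Matrix.cons_val_zero, Matrix.cons_val_one, Matrix.head_cons,
        Matrix.cons_val_two, Matrix.tail_cons, Matrix.cons_val_three]
      first
      | exact (isHomogeneous_X ℂ _).add (isHomogeneous_C_mul_X I _)
      | exact (isHomogeneous_X ℂ _).sub (isHomogeneous_C_mul_X I _)

lemma tau_homog (i : Fin 4) : (τsub i).IsHomogeneous 1 := by
  rcases fin4cases i with rfl|rfl|rfl|rfl <;>
    · simp only [τsub, Matrix.cons_val_zero, Matrix.cons_val_one, Matrix.head_cons,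
        Matrix.cons_val_two, Matrix.tail_cons, Matrix.cons_val_three]
      apply IsHomogeneous.C_mul
      first
      | exact (isHomogeneous_X ℂ _).add (isHomogeneous_X ℂ _)
      | exact (isHomogeneous_X ℂ _).sub (isHomogeneous_X ℂ _)

lemma homog_aeval_sigma {f : R4} {k : ℕ} (h : f.IsHomogeneous k) :
    (aeval σsub f).IsHomogeneous k := by
  simpa using h.aeval σsub sigma_homog

lemma homog_aeval_tau {f : R4} {k : ℕ} (h : f.IsHomogeneous k) :
    (aeval τsub f).IsHomogeneous k := by
  simpa using h.aeval τsub tau_homog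

lemma homog_coeff_zero {f : R4} {k : ℕ} (h : f.IsHomogeneous k) (α : Fin 4 →₀ ℕ)
    (hne : α 0 + α 1 + α 2 + α 3 ≠ k) : coeff α f = 0 := by
  by_contra hc
  have hw := h hc
  apply hne
  rw [← degree_eq_sum_univ]
  rw [Finsupp.degree_eq_weight_one]
  exact hw

end LensAux
noncomputable section LensMain

def Slens (k p : ℕ) (q : ℤ) : Finset (ℤ × ℤ) :=
  (Finset.Icc (-(k:ℤ), -(k:ℤ)) ((k:ℤ), (k:ℤ))).filter
    (fun lm => |lm.1| + |lm.2| ≤ (k:ℤ) ∧ (2:ℤ) ∣ (lm.1 + lm.2 - (k:ℤ))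
      ∧ (p:ℤ) ∣ (lm.1 + q * lm.2))

lemma Slens_mem {k p : ℕ} {q : ℤ} {lm : ℤ × ℤ} :
    lm ∈ Slens k p q ↔ (|lm.1| + |lm.2| ≤ (k:ℤ) ∧ (2:ℤ) ∣ (lm.1 + lm.2 - (k:ℤ))
      ∧ (p:ℤ) ∣ (lm.1 + q * lm.2)) := by
  rw [Slens, Finset.mem_filter]
  constructor
  · rintro ⟨_, h⟩; exact h
  · intro h
    refine ⟨?_, h⟩
    obtain ⟨h1, _, _⟩ := h
    rw [Finset.mem_Icc, Prod.le_def, Prod.le_def]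
    dsimp only
    have l1 := le_abs_self lm.1
    have l2 := neg_abs_le lm.1
    have l3 := le_abs_self lm.2
    have l4 := neg_abs_le lm.2
    have l5 := abs_nonneg lm.1
    have l6 := abs_nonneg lm.2
    refine ⟨⟨by linarith, by linarith⟩, by linarith, by linarith⟩

lemma lens_set_eq (k p : ℕ) (q : ℤ) :
    {lm : ℤ × ℤ | |lm.1| + |lm.2| ≤ (k : ℤ)
        ∧ (2 : ℤ) ∣ (lm.1 + lm.2 - (k : ℤ))
        ∧ (p : ℤ) ∣ (lm.1 + q * lm.2)} = ↑(Slens k p q) := by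
  ext lm
  rw [Finset.mem_coe, Slens_mem]
  rfl

def na (lm : ℤ × ℤ) : ℕ := lm.1.toNat
def nb (lm : ℤ × ℤ) : ℕ := (-lm.1).toNat
def nn (k : ℕ) (lm : ℤ × ℤ) : ℕ := (k - lm.1.natAbs - lm.2.natAbs) / 2
def nc (k : ℕ) (lm : ℤ × ℤ) : ℕ := lm.2.toNat + nn k lm
def nd (k : ℕ) (lm : ℤ × ℤ) : ℕ := (-lm.2).toNat + nn k lm
def HHf (k : ℕ) (lm : ℤ × ℤ) : R4 := hp (na lm) (nb lm) (nc k lm) (nd k lm)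
def bexp (k : ℕ) (lm : ℤ × ℤ) : Fin 4 →₀ ℕ := expt (na lm) (nb lm) (nc k lm) (nd k lm)

lemma S_facts {k p : ℕ} {q : ℤ} {lm : ℤ × ℤ} (h : lm ∈ Slens k p q) :
    na lm + nb lm + nc k lm + nd k lm = k
      ∧ min (nc k lm) (nd k lm) = nn k lm
      ∧ (na lm = 0 ∨ nb lm = 0)
      ∧ ((na lm : ℤ) - nb lm = lm.1)
      ∧ ((nc k lm : ℤ) - nd k lm = lm.2) := by
  rw [Slens_mem] at h
  obtain ⟨h1, h2, _⟩ := h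
  rw [Int.abs_eq_natAbs, Int.abs_eq_natAbs] at h1
  simp only [na, nb, nc, nd, nn]
  refine ⟨?_, ?_, ?_, ?_, ?_⟩ <;> omega

lemma cast_ne (a j : ℕ) : ((a:ℂ) + j + 1) ≠ 0 := by
  have h : ((a:ℂ) + j + 1) = ((a + j + 1 : ℕ) : ℂ) := by push_cast; ring
  rw [h]
  exact_mod_cast Nat.succ_ne_zero (a + j)

/-- The dimension count for the model space. -/
lemma finrank_Wsrc (k p : ℕ) (hp1 : 1 ≤ p) (q : ℤ) :
    Module.finrank ℂ
      ↥((homogeneousSubmodule (Fin 4) ℂ k ⊓ LinearMap.ker lapZ)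
        ⊓ LinearMap.ker ((aeval (dsub (evc (((2 * Real.pi / p : ℝ) : ℂ) * I)
            (((2 * Real.pi * q / p : ℝ) : ℂ) * I)))).toLinearMap
          - (LinearMap.id : R4 →ₗ[ℂ] R4)))
    = (Slens k p q).card := by
  classical
  set ee : Fin 4 → ℂ := evc (((2 * Real.pi / p : ℝ) : ℂ) * I)
      (((2 * Real.pi * q / p : ℝ) : ℂ) * I) with hee
  have prodeig : ∀ α : Fin 4 →₀ ℕ, ((∏ i, ee i ^ α i) = 1
      ↔ (p:ℤ) ∣ (((α 0 : ℤ) - α 1) + q * ((α 2 : ℤ) - α 3))) := by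
    intro α
    rw [hee, prod_evc]
    have hc1 : ((α 0 : ℕ):ℂ) - ((α 1 : ℕ):ℂ) = ((((α 0 : ℤ) - α 1) : ℤ) : ℂ) := by
      push_cast; ring
    have hc2 : ((α 2 : ℕ):ℂ) - ((α 3 : ℕ):ℂ) = ((((α 2 : ℤ) - α 3) : ℤ) : ℂ) := by
      push_cast; ring
    rw [hc1, hc2]
    exact exp_combo_eq_one_iff p hp1 q _ _
  -- membership of the basis vectors
  have hmem : ∀ lm ∈ Slens k p q, HHf k lm ∈
      ((homogeneousSubmodule (Fin 4) ℂ k ⊓ LinearMap.ker lapZ)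
        ⊓ LinearMap.ker ((aeval (dsub ee)).toLinearMap
          - (LinearMap.id : R4 →ₗ[ℂ] R4))) := by
    intro lm hlm
    obtain ⟨hsum, hmin, hab, hw1, hw2⟩ := S_facts hlm
    rw [Submodule.mem_inf, Submodule.mem_inf]
    refine ⟨⟨?_, ?_⟩, ?_⟩
    · rw [mem_homogeneousSubmodule]
      have hh := hp_homog (na lm) (nb lm) (nc k lm) (nd k lm)
      rw [hsum] at hh
      exact hh
    · exact hp_harmonic _ _ _ _ hab
    · rw [LinearMap.mem_ker, LinearMap.sub_apply, LinearMap.id_apply,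
        AlgHom.toLinearMap_apply, sub_eq_zero]
      apply MvPolynomial.ext
      intro α
      rw [coeff_aeval_dsub]
      by_cases h0 : coeff α (HHf k lm) = 0
      · rw [h0, mul_zero]
      · have hex : ∃ j, j ≤ min (nc k lm) (nd k lm)
            ∧ α = expt (na lm + j) (nb lm + j) (nc k lm - j) (nd k lm - j) := by
          by_contra hcon
          push_neg at hcon
          exact h0 (coeff_hp_ne _ _ _ _ α fun j hj => hcon j hj)
        obtain ⟨j, hj, rfl⟩ := hex
        rw [(prodeig _).mpr ?_, one_mul]
        have hd := (Slens_mem.mp hlm).2.2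
        simp only [expt_apply_0, expt_apply_1, expt_apply_2, expt_apply_3]
        have e1 : ((na lm + j : ℕ) : ℤ) - ((nb lm + j : ℕ) : ℤ) = lm.1 := by omega
        have e2 : ((nc k lm - j : ℕ) : ℤ) - ((nd k lm - j : ℕ) : ℤ) = lm.2 := by omega
        rw [e1, e2]
        exact hd
  -- the delta property
  have hdelta : ∀ lm ∈ Slens k p q, ∀ lm' ∈ Slens k p q,
      coeff (bexp k lm) (HHf k lm') = if lm' = lm then 1 else 0 := by
    intro lm hlm lm' hlm'
    obtain ⟨hsum, hmin, hab, hw1, hw2⟩ := S_facts hlm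
    obtain ⟨hsum', hmin', hab', hw1', hw2'⟩ := S_facts hlm'
    split_ifs with hEq
    · rw [hEq]
      have h0 := coeff_hp_self (na lm) (nb lm) (nc k lm) (nd k lm) 0 (Nat.zero_le _)
      have : expt (na lm + 0) (nb lm + 0) (nc k lm - 0) (nd k lm - 0) = bexp k lm := by
        rw [bexp, expt_eq_iff]; omega
      rw [this] at h0
      rw [HHf, h0, cf]
    · apply coeff_hp_ne
      intro j hj hc
      rw [bexp, expt_eq_iff] at hc
      apply hEq
      have : lm'.1 = lm.1 ∧ lm'.2 = lm.2 := by omega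
      exact Prod.ext this.1 this.2
  -- linear independence
  have hli : LinearIndependent ℂ (fun s : {x // x ∈ Slens k p q} => HHf k ↑s) := by
    rw [linearIndependent_iff']
    intro t g hsum0 i hit
    have hc := congrArg (coeff (bexp k ↑i)) hsum0
    rw [MvPolynomial.coeff_zero, MvPolynomial.coeff_sum] at hc
    simp only [MvPolynomial.coeff_smul, smul_eq_mul] at hc
    rw [Finset.sum_eq_single i] at hc
    · rw [hdelta _ i.2 _ i.2, if_pos rfl, mul_one] at hc
      exact hc
    · intro j _ hne
      rw [hdelta _ i.2 _ j.2, if_neg (fun hji => hne (Subtype.ext hji)), mul_zero]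
    · intro hni
      exact absurd hit hni
  -- spanning
  have hspan : ((homogeneousSubmodule (Fin 4) ℂ k ⊓ LinearMap.ker lapZ)
        ⊓ LinearMap.ker ((aeval (dsub ee)).toLinearMap
          - (LinearMap.id : R4 →ₗ[ℂ] R4)))
      = Submodule.span ℂ (Set.range (fun s : {x // x ∈ Slens k p q} => HHf k ↑s)) := by
    apply le_antisymm
    · intro f hf
      rw [Submodule.mem_inf, Submodule.mem_inf] at hf
      obtain ⟨⟨hhom, hharm⟩, hfix⟩ := hf
      rw [mem_homogeneousSubmodule] at hhom
      rw [LinearMap.mem_ker] at hharm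
      rw [LinearMap.mem_ker, LinearMap.sub_apply, LinearMap.id_apply,
        AlgHom.toLinearMap_apply, sub_eq_zero] at hfix
      have key : f = ∑ lm ∈ Slens k p q, coeff (bexp k lm) f • HHf k lm := by
        apply MvPolynomial.ext
        intro α
        rw [MvPolynomial.coeff_sum]
        simp only [MvPolynomial.coeff_smul, smul_eq_mul]
        by_cases hdeg : α 0 + α 1 + α 2 + α 3 = k
        · set ℓ : ℤ := (α 0 : ℤ) - α 1 with hℓ
          set m : ℤ := (α 2 : ℤ) - α 3 with hm
          by_cases hdvd : (p:ℤ) ∣ (ℓ + q * m)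
          · -- main case
            have hmemS : (ℓ, m) ∈ Slens k p q := by
              rw [Slens_mem]
              refine ⟨?_, ?_, hdvd⟩
              · rw [Int.abs_eq_natAbs, Int.abs_eq_natAbs]
                simp only [hℓ, hm]
                omega
              · simp only [hℓ, hm]
                omega
            obtain ⟨hsum, hmin, hab, hw1, hw2⟩ := S_facts hmemS
            set a := na (ℓ, m) with ha
            set b := nb (ℓ, m) with hb
            set c := nc k (ℓ, m) with hcc
            set d := nd k (ℓ, m) with hdd
            have hba : b ≤ α 1 := by omega
            set j : ℕ := α 1 - b with hjdef
            have hform : α = expt (a + j) (b + j) (c - j) (d - j) := by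
              apply finsupp4_ext <;> simp only [expt_apply_0, expt_apply_1,
                expt_apply_2, expt_apply_3] <;> omega
            have hjle : j ≤ min c d := by omega
            -- coefficient recursion
            have claim : ∀ j' : ℕ, j' ≤ min c d →
                coeff (expt (a+j') (b+j') (c-j') (d-j')) f
                  = cf a b c d j' * coeff (expt a b c d) f := by
              intro j'
              induction j' with
              | zero =>
                intro _
                have : expt (a+0) (b+0) (c-0) (d-0) = expt a b c d := by
                  rw [expt_eq_iff]; omega
                rw [this, cf, one_mul]
              | succ n ihn =>
                intro hn
                have ih := ihn (by omega)
                have hrec := harm_rec hharm (a+n) (b+n) (c-n-1) (d-n-1)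
                have e1 : expt (a+n+1) (b+n+1) (c-n-1) (d-n-1)
                    = expt (a+(n+1)) (b+(n+1)) (c-(n+1)) (d-(n+1)) := by
                  rw [expt_eq_iff]; omega
                have e2 : expt (a+n) (b+n) (c-n-1+1) (d-n-1+1)
                    = expt (a+n) (b+n) (c-n) (d-n) := by
                  rw [expt_eq_iff]; omega
                rw [e1, e2] at hrec
                have hkey := cf_rec a b c d n
                have hA0 : (((a:ℂ)+n+1) * ((b:ℂ)+n+1)) ≠ 0 :=
                  mul_ne_zero (cast_ne a n) (cast_ne b n)
                apply mul_left_cancel₀ hA0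
                have hc1 : ((c - n - 1 + 1 : ℕ) : ℂ) = ((c - n : ℕ) : ℂ) := by
                  norm_cast
                  omega
                have hd1 : ((d - n - 1 + 1 : ℕ) : ℂ) = ((d - n : ℕ) : ℂ) := by
                  norm_cast
                  omega
                rw [hc1, hd1] at hrec
                have hcast1 : ((a + n + 1 : ℕ) : ℂ) = (a:ℂ)+n+1 := by push_cast; ring
                have hcast2 : ((b + n + 1 : ℕ) : ℂ) = (b:ℂ)+n+1 := by push_cast; ring
                rw [hcast1, hcast2] at hrec
                linear_combination hrec - coeff (expt a b c d) f * hkey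
                  - ((c-n : ℕ):ℂ) * ((d-n : ℕ):ℂ) * ih
            -- evaluate the sum
            rw [Finset.sum_eq_single (ℓ, m)]
            · have hcoeffα : coeff α (HHf k (ℓ, m)) = cf a b c d j := by
                rw [HHf, hform]
                exact coeff_hp_self _ _ _ _ _ hjle
              have hbase : bexp k (ℓ, m) = expt a b c d := rfl
              rw [hcoeffα, hbase, hform, claim j hjle]
              ring
            · intro lm' hlm' hne
              obtain ⟨hsum', hmin', hab', hw1', hw2'⟩ := S_facts hlm'
              have : coeff α (HHf k lm') = 0 := by
                apply coeff_hp_ne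
                intro j' hj' hc
                apply hne
                have h0 := congrFun (congrArg (↑· : (Fin 4 →₀ ℕ) → Fin 4 → ℕ) hc) 0
                have h1 := congrFun (congrArg (↑· : (Fin 4 →₀ ℕ) → Fin 4 → ℕ) hc) 1
                have h2 := congrFun (congrArg (↑· : (Fin 4 →₀ ℕ) → Fin 4 → ℕ) hc) 2
                have h3 := congrFun (congrArg (↑· : (Fin 4 →₀ ℕ) → Fin 4 → ℕ) hc) 3
                simp only [expt_apply_0, expt_apply_1, expt_apply_2, expt_apply_3] at h0 h1 h2 h3
                have : lm'.1 = ℓ ∧ lm'.2 = m := by omega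
                exact Prod.ext this.1 this.2
              rw [this, mul_zero]
            · intro hni
              exact absurd hmemS hni
          · -- eigenvalue ≠ 1 : coefficient vanishes
            have hc0 : coeff α f = 0 := by
              have hca := coeff_aeval_dsub ee f α
              rw [hfix] at hca
              have h2 : ((∏ i, ee i ^ α i) - 1) * coeff α f = 0 := by
                linear_combination -hca
              rcases mul_eq_zero.mp h2 with h|h
              · exact absurd ((prodeig α).mp (by linear_combination h)) hdvd
              · exact h
            rw [hc0]
            symm
            apply Finset.sum_eq_zero
            intro lm' hlm'
            obtain ⟨hsum', hmin', hab', hw1', hw2'⟩ := S_facts hlm'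
            have : coeff α (HHf k lm') = 0 := by
              apply coeff_hp_ne
              intro j' hj' hc
              apply hdvd
              have h0 := congrFun (congrArg (↑· : (Fin 4 →₀ ℕ) → Fin 4 → ℕ) hc) 0
              have h1 := congrFun (congrArg (↑· : (Fin 4 →₀ ℕ) → Fin 4 → ℕ) hc) 1
              have h2 := congrFun (congrArg (↑· : (Fin 4 →₀ ℕ) → Fin 4 → ℕ) hc) 2
              have h3 := congrFun (congrArg (↑· : (Fin 4 →₀ ℕ) → Fin 4 → ℕ) hc) 3
              simp only [expt_apply_0, expt_apply_1, expt_apply_2, expt_apply_3] at h0 h1 h2 h3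
              have heq : ℓ = lm'.1 ∧ m = lm'.2 := by omega
              rw [heq.1, heq.2]
              exact (Slens_mem.mp hlm').2.2
            rw [this, mul_zero]
        · -- degree mismatch
          rw [homog_coeff_zero hhom α hdeg]
          symm
          apply Finset.sum_eq_zero
          intro lm hlm
          obtain ⟨hsum, hmin, hab, hw1, hw2⟩ := S_facts hlm
          have : coeff α (HHf k lm) = 0 := by
            apply coeff_hp_ne
            intro j hj hc
            apply hdeg
            have h0 := congrFun (congrArg (↑· : (Fin 4 →₀ ℕ) → Fin 4 → ℕ) hc) 0
            have h1 := congrFun (congrArg (↑· : (Fin 4 →₀ ℕ) → Fin 4 → ℕ) hc) 1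
            have h2 := congrFun (congrArg (↑· : (Fin 4 →₀ ℕ) → Fin 4 → ℕ) hc) 2
            have h3 := congrFun (congrArg (↑· : (Fin 4 →₀ ℕ) → Fin 4 → ℕ) hc) 3
            simp only [expt_apply_0, expt_apply_1, expt_apply_2, expt_apply_3] at h0 h1 h2 h3
            omega
          rw [this, mul_zero]
      rw [key]
      apply Submodule.sum_mem
      intro lm hlm
      exact Submodule.smul_mem _ _ (Submodule.subset_span ⟨⟨lm, hlm⟩, rfl⟩)
    · rw [Submodule.span_le]
      rintro x ⟨s, rfl⟩
      exact hmem ↑s s.2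
  rw [hspan, finrank_span_eq_card hli, Fintype.card_coe]

end LensMain

/-- Eigenmodes of the lens space `L(p,q)`: the dimension of the subspace of `𝒱ᵏ` fixed by
the holonomy generator `g` (rotation of angles `ψ₁ = 2π/p`, `ψ₂ = 2πq/p`) equals the
number of pairs `(ℓ,m) ∈ ℤ²` with `|ℓ| + |m| ≤ k`, `ℓ + m ≡ k (mod 2)` and
`ℓ + q·m ≡ 0 (mod p)`. -/
theorem lens_space_eigenmode_dimension (k p : ℕ) (hp : 1 ≤ p) (q : ℤ) :
    Module.finrank ℂ
      ↥(Vk k ⊓ LinearMap.ker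
        ((MvPolynomial.aeval (rotSub (2 * Real.pi / p) (2 * Real.pi * q / p))).toLinearMap
          - (LinearMap.id : MvPolynomial (Fin 4) ℂ →ₗ[ℂ] MvPolynomial (Fin 4) ℂ)))
    = Set.ncard {lm : ℤ × ℤ | |lm.1| + |lm.2| ≤ (k : ℤ)
        ∧ (2 : ℤ) ∣ (lm.1 + lm.2 - (k : ℤ))
        ∧ (p : ℤ) ∣ (lm.1 + q * lm.2)} := by
  classical
  rw [lens_set_eq k p q, Set.ncard_coe_finset, ← finrank_Wsrc k p hp q]
  set ee : Fin 4 → ℂ := evc (((2 * Real.pi / p : ℝ) : ℂ) * I)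
      (((2 * Real.pi * q / p : ℝ) : ℂ) * I) with hee
  set chv : R4 ≃ₐ[ℂ] R4 :=
    AlgEquiv.ofAlgHom (aeval σsub) (aeval τsub) comp_sigma_tau comp_tau_sigma with hchv
  have hrot := rot_aeval (2 * Real.pi / p) (2 * Real.pi * q / p)
  set W2 : Submodule ℂ R4 := ((homogeneousSubmodule (Fin 4) ℂ k ⊓ LinearMap.ker lapZ)
        ⊓ LinearMap.ker ((aeval (dsub ee)).toLinearMap
          - (LinearMap.id : R4 →ₗ[ℂ] R4))) with hW2
  have hsymm : ∀ y : R4, chv.toLinearEquiv.symm y = aeval τsub y := fun y => rfl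
  have hmapeq : (Vk k ⊓ LinearMap.ker
        ((MvPolynomial.aeval (rotSub (2 * Real.pi / p) (2 * Real.pi * q / p))).toLinearMap
          - (LinearMap.id : MvPolynomial (Fin 4) ℂ →ₗ[ℂ] MvPolynomial (Fin 4) ℂ)))
      = W2.map (chv.toLinearEquiv : R4 →ₗ[ℂ] R4) := by
    ext x
    rw [Submodule.mem_map_equiv, hsymm]
    have hx : x = aeval σsub (aeval τsub x) := (aeval_sigma_tau_apply x).symm
    set f := aeval τsub x with hfdef
    have hcomm : aeval (rotSub (2 * Real.pi / p) (2 * Real.pi * q / p)) (aeval σsub f)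
        = aeval σsub (aeval (dsub ee) f) := DFunLike.congr_fun hrot f
    have h4 : lap (aeval σsub f) = (4:ℂ) • aeval σsub (lapZ f) := lap_aeval f
    simp only [Vk, hW2, Submodule.mem_inf, LinearMap.mem_ker, LinearMap.sub_apply,
      LinearMap.id_apply, AlgHom.toLinearMap_apply, mem_homogeneousSubmodule, sub_eq_zero]
    constructor
    · rintro ⟨⟨hh, hl⟩, hr⟩
      refine ⟨⟨homog_aeval_tau hh, ?_⟩, ?_⟩
      · rw [← hx, hl] at h4
        have h5 : aeval σsub (lapZ f) = 0 := by
          have h6 := h4.symm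
          rcases smul_eq_zero.mp h6 with h|h
          · norm_num at h
          · exact h
        apply aeval_sigma_inj
        show aeval σsub (lapZ f) = aeval σsub 0
        rw [h5, map_zero]
      · apply aeval_sigma_inj
        show aeval σsub (aeval (dsub ee) f) = aeval σsub f
        rw [← hcomm, ← hx, hr]
    · rintro ⟨⟨hh, hl⟩, hr⟩
      refine ⟨⟨?_, ?_⟩, ?_⟩
      · rw [hx]
        exact homog_aeval_sigma hh
      · rw [hx, h4, hl, map_zero, smul_zero]
      · rw [hx, hcomm, hr]
  rw [hmapeq, LinearEquiv.finrank_map_eq]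
end
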